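/- On the elliptic curve $y^2 - (k^2 - 2k + 2)\,x\,y = x(x-1)(x-k^2)$ over $\mathbb{Q}(k)$, the point $(0,0)$ has exact order $2$ and the point $(k, k)$ has exact order $4$. -/

import Mathlib

noncomputable section

open WeierstrassCurve.Affine WeierstrassCurve.Affine.Point

lemma point_some_congr {F : Type*} [Field F] {W : WeierstrassCurve.Affine F}
    {x₁ y₁ x₂ y₂ : F} (hx : x₁ = x₂) (hy : y₁ = y₂) {h₁ : W.Nonsingular x₁ y₁}
    {h₂ : W.Nonsingular x₂ y₂} : Point.some _ _ h₁ = Point.some _ _ h₂ := by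
  subst hx; subst hy; rfl

lemma aux_ne : (RatFunc.X ^ 2 * (2 - RatFunc.X) : RatFunc ℚ) ≠ 0 := by
  have h2 : (2 - RatFunc.X : RatFunc ℚ) ≠ 0 := by
    have : (2 - RatFunc.X : RatFunc ℚ) = algebraMap (Polynomial ℚ) _ (2 - Polynomial.X) := by
      simp [map_sub, RatFunc.algebraMap_X, map_ofNat]
    rw [this]
    exact RatFunc.algebraMap_ne_zero (fun h => by simpa using congrArg (Polynomial.eval 0) h)
  exact mul_ne_zero (pow_ne_zero _ RatFunc.X_ne_zero) h2

/-- The elliptic curve `y² - (k² - 2k + 2)xy = x(x-1)(x-k²)` over `ℚ(k)`. -/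
def W9 : WeierstrassCurve.Affine (RatFunc ℚ) :=
  { a₁ := -(RatFunc.X ^ 2 - 2 * RatFunc.X + 2), a₂ := -(1 + RatFunc.X ^ 2), a₃ := 0,
    a₄ := RatFunc.X ^ 2, a₆ := 0 }

open Classical

lemma hP : W9.Nonsingular 0 0 := by
  rw [nonsingular_zero]
  exact ⟨rfl, Or.inr (pow_ne_zero _ RatFunc.X_ne_zero)⟩

lemma hQQ_ne : RatFunc.X ≠ W9.negY RatFunc.X RatFunc.X := by
  intro h
  apply aux_ne
  simp only [W9, negY] at h
  linear_combination h

lemma hQ : W9.Nonsingular RatFunc.X RatFunc.X := by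
  rw [nonsingular_iff]
  constructor
  · rw [equation_iff]; simp only [W9]; ring
  · exact Or.inr fun h => hQQ_ne (by rw [WeierstrassCurve.Affine.negY]; exact h)

lemma slope_eq : W9.slope RatFunc.X RatFunc.X RatFunc.X RatFunc.X = 1 := by
  rw [slope_of_Y_ne rfl hQQ_ne]
  rw [div_eq_one_iff_eq]
  · simp only [W9, negY]; ring
  · intro h
    apply aux_ne
    simp only [W9, negY] at h
    linear_combination h

lemma hdouble : Point.some _ _ hQ + Point.some _ _ hQ = Point.some _ _ hP := by
  rw [add_self_of_Y_ne hQQ_ne]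
  apply point_some_congr
  · rw [slope_eq]; simp only [addX, W9]; ring
  · rw [slope_eq]; simp only [addY, negAddY, addX, negY, W9]; ring

lemma hP2 : Point.some _ _ hP + Point.some _ _ hP = 0 :=
  add_self_of_Y_eq (by simp only [W9, negY]; ring)

/-- `(0,0)` has exact order 2 and `(k,k)` has exact order 4. -/
theorem stmt9 :
    ∃ h₂ : W9.Nonsingular 0 0, ∃ h₄ : W9.Nonsingular RatFunc.X RatFunc.X,
      addOrderOf (WeierstrassCurve.Affine.Point.some _ _ h₂) = 2 ∧
      addOrderOf (WeierstrassCurve.Affine.Point.some _ _ h₄) = 4 := by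
  refine ⟨hP, hQ, ?_, ?_⟩
  · exact addOrderOf_eq_prime (by rw [two_nsmul]; exact hP2) (some_ne_zero hP)
  · have h4 : (4 : ℕ) • Point.some _ _ hQ = 0 := by
      have : (4 : ℕ) • Point.some _ _ hQ = (Point.some _ _ hQ + Point.some _ _ hQ)
          + (Point.some _ _ hQ + Point.some _ _ hQ) := by
        rw [show (4 : ℕ) = 2 + 2 from rfl, add_nsmul, two_nsmul]
      rw [this, hdouble, hP2]
    have h2 : (2 : ℕ) • Point.some _ _ hQ ≠ 0 := by
      rw [two_nsmul, hdouble]; exact some_ne_zero hP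
    have hdvd : addOrderOf (Point.some _ _ hQ) ∣ 4 := addOrderOf_dvd_of_nsmul_eq_zero h4
    obtain ⟨i, hi, hord⟩ := (Nat.dvd_prime_pow Nat.prime_two).mp ((show (4:ℕ) = 2 ^ 2 by norm_num) ▸ hdvd)
    interval_cases i
    · exact absurd (AddMonoid.addOrderOf_eq_one_iff.mp (by simpa using hord)) (some_ne_zero hQ)
    · exact absurd (hord ▸ addOrderOf_nsmul_eq_zero (Point.some _ _ hQ)) (by simpa using h2)
    · simpa using hord
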